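/- Let β = (1+√5)/2 be the golden mean and α ∈ ((3β-2)/2, 4β-5). For the generalised β-transformations T_{α,0}(x) = βx+α on [-β,-1/β), βx on (-1/β,1), βx-α on (1,β], and T_{α,1}(x) = βx+α on [-β,-1), βx on (-1,1/β), βx-α on (1/β,β], one has: T_{α,0}(1⁻) = β, T_{α,1}(1⁻) = T_{α,j}(1⁺) = β - α for j = 0,1, and for any word u of length 2 over {0,1}, T_{α,u}(β) = β²(β-α) = T_{α,u}(β-α). In particular all random orbits of the left and right limits at the critical point 1 coincide at time 3. -/

import Mathlib

open Filter Topology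

/-- The two generalised `β`-transformations `T_{α,0}` (`j = false`) and `T_{α,1}`
(`j = true`) on `[-β,β]`, with slope `β` and translations `0, ±α`.  The values at the
discontinuity points are chosen arbitrarily (claims at those points are about one-sided
limits). -/
noncomputable def genBeta (β α : ℝ) (j : Bool) (x : ℝ) : ℝ :=
  match j with
  | false => if x < -(1/β) then β*x + α else if x ≤ 1 then β*x else β*x - α
  | true  => if x < -1 then β*x + α else if x < 1/β then β*x else β*x - α

/-- `T_{α,u} = T_{α,u_2} ∘ T_{α,u_1}` for a word `u = u_1 u_2`. -/
noncomputable def genBetaWord (β α : ℝ) (u : List Bool) (x : ℝ) : ℝ :=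
  u.foldl (fun y j => genBeta β α j y) x

/-- Let `β = (1+√5)/2` and `α ∈ ((3β-2)/2, 4β-5)`.  Then `T_{α,0}(1⁻) = β`,
`T_{α,1}(1⁻) = T_{α,j}(1⁺) = β - α` for `j = 0,1`, and for any word `u` of length 2,
`T_{α,u}(β) = β²(β-α) = T_{α,u}(β-α)`: all random orbits of the one-sided limits at the
critical point `1` coincide at time `3`. -/
theorem stmt11 (α : ℝ)
    (hα : α ∈ Set.Ioo ((3*((1+Real.sqrt 5)/2)-2)/2) (4*((1+Real.sqrt 5)/2)-5)) :
    Tendsto (genBeta ((1+Real.sqrt 5)/2) α false) (𝓝[<] 1) (𝓝 ((1+Real.sqrt 5)/2)) ∧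
    Tendsto (genBeta ((1+Real.sqrt 5)/2) α true) (𝓝[<] 1)
      (𝓝 ((1+Real.sqrt 5)/2 - α)) ∧
    (∀ j : Bool, Tendsto (genBeta ((1+Real.sqrt 5)/2) α j) (𝓝[>] 1)
      (𝓝 ((1+Real.sqrt 5)/2 - α))) ∧
    (∀ u : List Bool, u.length = 2 →
      genBetaWord ((1+Real.sqrt 5)/2) α u ((1+Real.sqrt 5)/2)
        = ((1+Real.sqrt 5)/2)^2 * ((1+Real.sqrt 5)/2 - α) ∧
      genBetaWord ((1+Real.sqrt 5)/2) α u ((1+Real.sqrt 5)/2 - α)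
        = ((1+Real.sqrt 5)/2)^2 * ((1+Real.sqrt 5)/2 - α)) := by
  have hs0 : (0:ℝ) ≤ 5 := by norm_num
  have hs : Real.sqrt 5 * Real.sqrt 5 = 5 := Real.mul_self_sqrt hs0
  have hsnn : (0:ℝ) ≤ Real.sqrt 5 := Real.sqrt_nonneg 5
  have hs1 : (2.2:ℝ) < Real.sqrt 5 := by nlinarith
  have hs2 : Real.sqrt 5 < (2.24:ℝ) := by nlinarith
  set b : ℝ := (1+Real.sqrt 5)/2 with hbdef
  obtain ⟨hαl, hαr⟩ := hα
  have hb1 : (1.6:ℝ) < b := by rw [hbdef]; linarith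
  have hb2 : b < (1.62:ℝ) := by rw [hbdef]; linarith
  have hb0 : (0:ℝ) < b := by linarith
  have hα1 : (1.4:ℝ) < α := by linarith
  have hα2 : α < (1.48:ℝ) := by linarith
  have hbb : b * b = b + 1 := by rw [hbdef]; linear_combination hs/4
  have h1b_lo : (0.6:ℝ) < 1/b := by
    rw [lt_div_iff₀ hb0]; linarith
  have h1b_hi : 1/b < (0.63:ℝ) := by
    rw [div_lt_iff₀ hb0]; linarith
  have hprod : b * (b - α) < (0.36:ℝ) := by nlinarith
  have hprod0 : (0:ℝ) < b * (b - α) := by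
    apply mul_pos hb0; linarith
  -- limits of the affine pieces
  have hlim1 : Tendsto (fun x : ℝ => b * x) (𝓝[<] 1) (𝓝 b) := by
    simpa using ((continuous_mul_left b).tendsto 1).mono_left nhdsWithin_le_nhds
  have hlim2 : Tendsto (fun x : ℝ => b * x - α) (𝓝[<] 1) (𝓝 (b - α)) := by
    simpa [Pi.sub_def] using (((continuous_mul_left b).sub continuous_const).tendsto 1).mono_left
      nhdsWithin_le_nhds
  have hlim3 : Tendsto (fun x : ℝ => b * x - α) (𝓝[>] 1) (𝓝 (b - α)) := by
    simpa [Pi.sub_def] using (((continuous_mul_left b).sub continuous_const).tendsto 1).mono_left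
      nhdsWithin_le_nhds
  have hmemL : Set.Ioo (1/b) 1 ∈ 𝓝[<] (1:ℝ) :=
    Ioo_mem_nhdsLT_of_mem ⟨by linarith, le_refl 1⟩
  have hmemR : Set.Ioo (1:ℝ) 2 ∈ 𝓝[>] (1:ℝ) :=
    Ioo_mem_nhdsGT_of_mem ⟨le_refl 1, by norm_num⟩
  refine ⟨?_, ?_, ?_, ?_⟩
  · refine Tendsto.congr' ?_ hlim1
    filter_upwards [hmemL] with x hx
    simp only [genBeta]
    rw [if_neg (by push_neg; linarith [hx.1]), if_pos hx.2.le]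
  · refine Tendsto.congr' ?_ hlim2
    filter_upwards [hmemL] with x hx
    simp only [genBeta]
    rw [if_neg (by push_neg; linarith [hx.1]), if_neg (by push_neg; exact hx.1.le)]
  · intro j
    refine Tendsto.congr' ?_ hlim3
    filter_upwards [hmemR] with x hx
    cases j <;> simp only [genBeta]
    · rw [if_neg (by push_neg; linarith [hx.1]), if_neg (by push_neg; linarith [hx.1])]
    · rw [if_neg (by push_neg; linarith [hx.1]), if_neg (by push_neg; linarith [hx.1])]
  · -- word part
    have step1 : ∀ j, genBeta b α j b = b * b - α := by
      intro j
      cases j <;> simp only [genBeta]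
      · rw [if_neg (by push_neg; linarith), if_neg (by push_neg; linarith)]
      · rw [if_neg (by push_neg; linarith), if_neg (by push_neg; linarith)]
    have step2 : ∀ j, genBeta b α j (b - α) = b * (b - α) := by
      intro j
      cases j <;> simp only [genBeta]
      · rw [if_neg (by push_neg; linarith), if_pos (by linarith)]
      · rw [if_neg (by push_neg; linarith), if_pos (by linarith)]
    have step3 : ∀ j, genBeta b α j (b * b - α) = b^2 * (b - α) := by
      intro j
      cases j <;> simp only [genBeta]
      · rw [if_neg (by push_neg; linarith), if_neg (by push_neg; linarith)]
        linear_combination α * hbb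
      · rw [if_neg (by push_neg; linarith), if_neg (by push_neg; linarith)]
        linear_combination α * hbb
    have step4 : ∀ j, genBeta b α j (b * (b - α)) = b^2 * (b - α) := by
      intro j
      cases j <;> simp only [genBeta]
      · rw [if_neg (by push_neg; linarith), if_pos (by linarith)]
        ring
      · rw [if_neg (by push_neg; linarith), if_pos (by linarith)]
        ring
    intro u hu
    obtain ⟨j1, j2, rfl⟩ := List.length_eq_two.mp hu
    constructor
    · show genBeta b α j2 (genBeta b α j1 b) = b^2 * (b - α)
      rw [step1 j1, step3 j2]
    · show genBeta b α j2 (genBeta b α j1 (b - α)) = b^2 * (b - α)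
      rw [step2 j1, step4 j2]
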